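/- Let x = (x_1, ..., x_m) be a nonzero vector in ℂ^m, and define c_k = Σ_{i=k+1}^m x_i x̄_{i−k} for k = 0, ..., m−1 and c_{−k} = c̄_k. Then the m×m Toeplitz matrix C_x with entries (C_x)_{ij} = c_{j−i} is Hermitian positive definite. -/

import Mathlib

open Matrix ComplexOrder

variable {m : ℕ}

/-- Sample autocorrelation sequence: `c k = Σ_{i : k ≤ i < m} x i * conj (x (i−k))`
(0-based indexing of the 1-based `c_k = Σ_{i=k+1}^m x_i x̄_{i−k}`). -/
noncomputable def autocorr (x : Fin m → ℂ) (k : ℕ) : ℂ :=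
  ∑ i : Fin m, if k ≤ (i : ℕ) then
    x i * star (x ⟨(i : ℕ) - k, Nat.lt_of_le_of_lt (Nat.sub_le _ _) i.isLt⟩) else 0

/-- The Toeplitz covariance matrix of `x`, with `(i,j)` entry `c_{j−i}`,
where `c_{−k} = conj (c_k)`. -/
noncomputable def toeplitzCov (x : Fin m → ℂ) : Matrix (Fin m) (Fin m) ℂ :=
  Matrix.of fun i j =>
    if (i : ℕ) ≤ (j : ℕ) then autocorr x ((j : ℕ) - (i : ℕ))
    else star (autocorr x ((i : ℕ) - (j : ℕ)))

/-- The shift (convolution) matrix whose `(t,j)` entry is `conj (x (t - j))`. -/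
noncomputable def shiftMat (x : Fin m → ℂ) : Matrix (Fin (2 * m)) (Fin m) ℂ :=
  Matrix.of fun t j =>
    if h : (j : ℕ) ≤ (t : ℕ) ∧ (t : ℕ) - (j : ℕ) < m then
      star (x ⟨(t : ℕ) - (j : ℕ), h.2⟩) else 0

lemma sum_shift (i : Fin m) (F : Fin m → ℂ) :
    (∑ t : Fin (2 * m), if h : (i : ℕ) ≤ (t : ℕ) ∧ (t : ℕ) - (i : ℕ) < m then
      F ⟨(t : ℕ) - (i : ℕ), h.2⟩ else 0) = ∑ u : Fin m, F u := by
  have hi := i.isLt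
  set e : Fin m → Fin (2 * m) := fun u => ⟨(u : ℕ) + (i : ℕ), by omega⟩ with he
  have hinj : Function.Injective e := by
    intro a b hab
    have : (a : ℕ) + i = (b : ℕ) + i := congrArg Fin.val hab
    exact Fin.ext (by omega)
  rw [← Finset.sum_subset (Finset.subset_univ (Finset.univ.image e))]
  · rw [Finset.sum_image (fun a _ b _ h => hinj h)]
    refine Finset.sum_congr rfl fun u _ => ?_
    have hc : (i : ℕ) ≤ ((e u : Fin (2 * m)) : ℕ) ∧ ((e u : Fin (2 * m)) : ℕ) - (i : ℕ) < m := by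
      simp only [he]; exact ⟨by omega, by simp⟩
    rw [dif_pos hc]
    congr 1
    exact Fin.ext (by simp [he])
  · intro t _ ht
    rw [dif_neg]
    intro hc
    exact ht (Finset.mem_image.mpr ⟨⟨(t : ℕ) - (i : ℕ), hc.2⟩, Finset.mem_univ _,
      Fin.ext (by simp [he]; omega)⟩)

lemma shiftMat_entry_le (x : Fin m → ℂ) (i j : Fin m) (hij : (i : ℕ) ≤ (j : ℕ)) :
    ((shiftMat x)ᴴ * shiftMat x) i j = autocorr x ((j : ℕ) - (i : ℕ)) := by
  have key : ∀ t : Fin (2 * m),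
      star (shiftMat x t i) * shiftMat x t j =
        if h : (i : ℕ) ≤ (t : ℕ) ∧ (t : ℕ) - (i : ℕ) < m then
          (fun u : Fin m => if (j : ℕ) - (i : ℕ) ≤ (u : ℕ) then
            x u * star (x ⟨(u : ℕ) - ((j : ℕ) - (i : ℕ)),
              Nat.lt_of_le_of_lt (Nat.sub_le _ _) u.isLt⟩) else 0)
          ⟨(t : ℕ) - (i : ℕ), h.2⟩ else 0 := by
    intro t
    by_cases h1 : (i : ℕ) ≤ (t : ℕ) ∧ (t : ℕ) - (i : ℕ) < m
    · rw [dif_pos h1]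
      simp only [shiftMat, Matrix.of_apply, dif_pos h1, star_star]
      by_cases h2 : (j : ℕ) ≤ (t : ℕ)
      · have h3 : (t : ℕ) - (j : ℕ) < m := by omega
        rw [dif_pos ⟨h2, h3⟩, if_pos (by omega)]
        have hfin : (⟨(t : ℕ) - (j : ℕ), h3⟩ : Fin m)
            = ⟨(t : ℕ) - (i : ℕ) - ((j : ℕ) - (i : ℕ)),
                Nat.lt_of_le_of_lt (Nat.sub_le _ _) h1.2⟩ :=
          Fin.ext (show (t : ℕ) - (j : ℕ) = (t : ℕ) - (i : ℕ) - ((j : ℕ) - (i : ℕ)) by omega)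
        rw [hfin]
      · rw [dif_neg (by tauto), if_neg (by omega), mul_zero]
    · rw [dif_neg h1]
      simp only [shiftMat, Matrix.of_apply]
      by_cases h2 : (i : ℕ) ≤ (t : ℕ) ∧ (t : ℕ) - (i : ℕ) < m
      · exact absurd h2 h1
      · rw [dif_neg h2, star_zero, zero_mul]
  rw [Matrix.mul_apply]
  simp only [Matrix.conjTranspose_apply]
  refine (Finset.sum_congr rfl fun t _ => key t).trans ?_
  exact (sum_shift i (fun u : Fin m => if (j : ℕ) - (i : ℕ) ≤ (u : ℕ) then
    x u * star (x ⟨(u : ℕ) - ((j : ℕ) - (i : ℕ)),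
      Nat.lt_of_le_of_lt (Nat.sub_le _ _) u.isLt⟩) else 0)).trans rfl

lemma toeplitzCov_eq (x : Fin m → ℂ) :
    toeplitzCov x = (shiftMat x)ᴴ * shiftMat x := by
  ext i j
  rcases le_or_gt (i : ℕ) (j : ℕ) with h | h
  · rw [shiftMat_entry_le x i j h]
    simp only [toeplitzCov, Matrix.of_apply]
    rw [if_pos h]
  · have herm := Matrix.isHermitian_conjTranspose_mul_self (shiftMat x)
    have : ((shiftMat x)ᴴ * shiftMat x) i j = star (((shiftMat x)ᴴ * shiftMat x) j i) :=
      (Matrix.IsHermitian.apply herm i j).symm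
    rw [this, shiftMat_entry_le x j i (le_of_lt h)]
    simp only [toeplitzCov, Matrix.of_apply]
    rw [if_neg (not_le.mpr h)]

lemma shiftMat_mulVec_ne_zero (x : Fin m → ℂ) (hx : x ≠ 0) (v : Fin m → ℂ) (hv : v ≠ 0) :
    shiftMat x *ᵥ v ≠ 0 := by
  have hxe : ∃ k : ℕ, ∃ hk : k < m, x ⟨k, hk⟩ ≠ 0 := by
    by_contra hc
    push_neg at hc
    exact hx (funext fun k => by simpa using hc k k.isLt)
  have hve : ∃ k : ℕ, ∃ hk : k < m, v ⟨k, hk⟩ ≠ 0 := by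
    by_contra hc
    push_neg at hc
    exact hv (funext fun k => by simpa using hc k k.isLt)
  classical
  set p := Nat.find hxe with hp
  set q := Nat.find hve with hq
  obtain ⟨hpm, hxp⟩ := Nat.find_spec hxe
  obtain ⟨hqm, hvq⟩ := Nat.find_spec hve
  intro h0
  have ht : p + q < 2 * m := by omega
  have := congrFun h0 ⟨p + q, ht⟩
  rw [Matrix.mulVec, dotProduct] at this
  have hsum : ∀ j : Fin m, j ≠ ⟨q, hqm⟩ →
      shiftMat x ⟨p + q, ht⟩ j * v j = 0 := by
    intro j hj
    rcases lt_or_ge (j : ℕ) q with hlt | hle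
    · have : v j = 0 := by
        by_contra hvj
        exact Nat.find_min hve hlt ⟨j.isLt, by simpa using hvj⟩
      rw [this, mul_zero]
    · have hgt : q < (j : ℕ) := lt_of_le_of_ne hle (fun h => hj (Fin.ext h.symm))
      simp only [shiftMat, Matrix.of_apply]
      by_cases hc : (j : ℕ) ≤ p + q ∧ p + q - (j : ℕ) < m
      · rw [dif_pos hc]
        have hlt' : p + q - (j : ℕ) < p := by omega
        have : x ⟨p + q - (j : ℕ), hc.2⟩ = 0 := by
          by_contra hxj
          exact Nat.find_min hxe hlt' ⟨hc.2, hxj⟩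
        rw [this, star_zero, zero_mul]
      · rw [dif_neg hc, zero_mul]
  rw [Finset.sum_eq_single ⟨q, hqm⟩ (fun j _ => hsum j) (fun h => absurd (Finset.mem_univ _) h)]
      at this
  simp only [shiftMat, Matrix.of_apply] at this
  rw [dif_pos ⟨by omega, by omega⟩] at this
  have hxp' : x ⟨p + q - q, by omega⟩ ≠ 0 := by
    have : (⟨p + q - q, by omega⟩ : Fin m) = ⟨p, hpm⟩ := Fin.ext (show p + q - q = p by omega)
    rw [this]; exact hxp
  exact (mul_ne_zero (star_ne_zero.mpr hxp') hvq) this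

/-- The Toeplitz autocorrelation matrix of a nonzero signal is Hermitian
positive definite. -/
theorem toeplitzCov_posDef (x : Fin m → ℂ) (hx : x ≠ 0) :
    (toeplitzCov x).PosDef := by
  rw [toeplitzCov_eq]
  refine Matrix.PosDef.of_dotProduct_mulVec_pos (Matrix.isHermitian_conjTranspose_mul_self _) fun v hv => ?_
  rw [← Matrix.mulVec_mulVec, Matrix.dotProduct_mulVec, Matrix.vecMul_conjTranspose, star_star]
  exact Matrix.dotProduct_star_self_pos_iff.mpr (shiftMat_mulVec_ne_zero x hx v hv)
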